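/- Let N_φ, N_ψ ∈ ℂ with conj(N_ψ) N_φ = e/(2√π). Define φₙ(x) = (N_φ/(2ⁿ √(n!))) Hₙ(sinh x) e^{−cosh²x} and ψₙ(x) = (2N_ψ/√(n!)) Hₙ(sinh x) cosh x. Then for all n, m ≥ 0 the product conj(ψₘ) φₙ is Lebesgue integrable on ℝ and ∫_ℝ conj(ψₘ(x)) φₙ(x) dx = δ_{n,m}. -/

import Mathlib

open MeasureTheory

/-- The physicist's Hermite polynomials:
`H₀(y) = 1`, `Hₙ(y) = 2y H_{n−1}(y) − H_{n−1}′(y)`. -/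
noncomputable def hermiteH : ℕ → ℝ → ℝ
  | 0 => fun _ => 1
  | n + 1 => fun y => 2 * y * hermiteH n y - deriv (hermiteH n) y

open Polynomial Real

noncomputable def physP : ℕ → Polynomial ℝ
  | 0 => 1
  | n + 1 => 2 * Polynomial.X * physP n - Polynomial.derivative (physP n)

lemma hermiteH_eq (n : ℕ) : hermiteH n = fun y => (physP n).eval y := by
  induction n with
  | zero => funext y; simp [hermiteH, physP]
  | succ n ih =>
    funext y
    rw [hermiteH, physP, ih]
    simp [Polynomial.deriv]

lemma physP_deriv (n : ℕ) :
    Polynomial.derivative (physP (n + 1)) = Polynomial.C (2 * (n + 1) : ℝ) * physP n := by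
  induction n with
  | zero =>
    show Polynomial.derivative (2 * Polynomial.X * physP 0 - Polynomial.derivative (physP 0)) = _
    show Polynomial.derivative (2 * Polynomial.X * 1 - Polynomial.derivative 1) = _
    simp [physP]
    norm_num [map_ofNat]
  | succ n ih =>
    have h2 : physP (n + 1) = 2 * Polynomial.X * physP n - Polynomial.derivative (physP n) := rfl
    rw [show physP (n+2) = 2 * Polynomial.X * physP (n+1) - Polynomial.derivative (physP (n+1)) from rfl,
      Polynomial.derivative_sub, Polynomial.derivative_mul, ih, Polynomial.derivative_C_mul, h2]
    apply Polynomial.funext; intro x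
    push_cast
    simp
    ring

lemma integrable_pow_gauss (n : ℕ) : Integrable (fun x : ℝ => x ^ n * Real.exp (-x ^ 2)) := by
  have := integrable_rpow_mul_exp_neg_mul_sq (b := 1) one_pos (s := (n : ℝ))
    (by exact_mod_cast neg_one_lt_zero.trans_le (Nat.cast_nonneg n))
  simpa [Real.rpow_natCast] using this

lemma integrable_poly_gauss (q : Polynomial ℝ) :
    Integrable (fun x : ℝ => q.eval x * Real.exp (-x ^ 2)) := by
  have : (fun x : ℝ => q.eval x * Real.exp (-x ^ 2)) =
      fun x : ℝ => ∑ i ∈ Finset.range (q.natDegree + 1),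
        q.coeff i * (x ^ i * Real.exp (-x ^ 2)) := by
    funext x
    rw [Polynomial.eval_eq_sum_range, Finset.sum_mul]
    simp [mul_assoc]
  rw [this]
  exact integrable_finset_sum _ fun i _ => (integrable_pow_gauss i).const_mul _

lemma hasDerivAt_gauss (n : ℕ) (y : ℝ) :
    HasDerivAt (fun y => (physP n).eval y * Real.exp (-y ^ 2))
      (-((physP (n + 1)).eval y * Real.exp (-y ^ 2))) y := by
  have h1 : HasDerivAt (fun y : ℝ => (physP n).eval y)
      ((Polynomial.derivative (physP n)).eval y) y := (physP n).hasDerivAt y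
  have h2 : HasDerivAt (fun y : ℝ => Real.exp (-y ^ 2)) (-(2 * y) * Real.exp (-y ^ 2)) y := by
    have h : HasDerivAt (fun y : ℝ => -y ^ 2) (-(2 * y)) y := by
      simpa using (hasDerivAt_pow 2 y).fun_neg
    simpa [mul_comm] using h.exp
  have h3 := h1.fun_mul h2
  have h4 : (physP (n + 1)).eval y
      = 2 * y * (physP n).eval y - (Polynomial.derivative (physP n)).eval y := by
    show (2 * Polynomial.X * physP n - Polynomial.derivative (physP n) : Polynomial ℝ).eval y = _
    simp
  refine h3.congr_deriv ?_
  rw [h4]; ring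

lemma integral_gauss_poly_succ (k : ℕ) :
    ∫ y : ℝ, (physP (k + 1)).eval y * Real.exp (-y ^ 2) = 0 :=
  integral_eq_zero_of_hasDerivAt_of_integrable
    (fun y => by simpa using (hasDerivAt_gauss k y).neg)
    (integrable_poly_gauss _) ((integrable_poly_gauss _).neg)

lemma integrable_J (n m : ℕ) :
    Integrable (fun y : ℝ => (physP n).eval y * (physP m).eval y * Real.exp (-y ^ 2)) := by
  have h : (fun y : ℝ => (physP n).eval y * (physP m).eval y * Real.exp (-y ^ 2)) =
      fun y => (physP n * physP m).eval y * Real.exp (-y ^ 2) := by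
    funext y; simp
  rw [h]; exact integrable_poly_gauss _

lemma J_eq : ∀ n m : ℕ, (∫ y : ℝ, (physP n).eval y * (physP m).eval y * Real.exp (-y ^ 2))
    = if n = m then 2 ^ n * n.factorial * Real.sqrt Real.pi else 0 := by
  intro n
  induction n with
  | zero =>
    intro m
    cases m with
    | zero =>
      rw [if_pos rfl]
      have : (fun y : ℝ => (physP 0).eval y * (physP 0).eval y * Real.exp (-y ^ 2)) =
          fun y : ℝ => Real.exp (-1 * y ^ 2) := by
        funext y; simp [physP]
      rw [this]
      simpa using integral_gaussian 1
    | succ k =>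
      rw [if_neg (by omega)]
      have : (fun y : ℝ => (physP 0).eval y * (physP (k + 1)).eval y * Real.exp (-y ^ 2)) =
          fun y : ℝ => (physP (k + 1)).eval y * Real.exp (-y ^ 2) := by
        funext y; simp [physP]
      rw [this]
      exact integral_gauss_poly_succ k
  | succ n ih =>
    intro m
    have key : (∫ y : ℝ, (physP (n + 1)).eval y * (physP m).eval y * Real.exp (-y ^ 2))
        = ∫ y : ℝ, (physP n).eval y * (Polynomial.derivative (physP m)).eval y
            * Real.exp (-y ^ 2) := by
      have hF : ∀ y : ℝ, HasDerivAt
          (fun y => ((physP n).eval y * Real.exp (-y ^ 2)) * (physP m).eval y)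
          (-((physP (n + 1)).eval y * Real.exp (-y ^ 2)) * (physP m).eval y
            + ((physP n).eval y * Real.exp (-y ^ 2))
              * (Polynomial.derivative (physP m)).eval y) y :=
        fun y => (hasDerivAt_gauss n y).mul ((physP m).hasDerivAt y)
      have hB : Integrable (fun y : ℝ => (physP n).eval y
          * (Polynomial.derivative (physP m)).eval y * Real.exp (-y ^ 2)) := by
        have h : (fun y : ℝ => (physP n).eval y * (Polynomial.derivative (physP m)).eval y
            * Real.exp (-y ^ 2)) =
            fun y => (physP n * Polynomial.derivative (physP m)).eval y * Real.exp (-y ^ 2) := by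
          funext y; simp
        rw [h]; exact integrable_poly_gauss _
      have hA := integrable_J (n + 1) m
      have hint : Integrable (fun y : ℝ =>
          -((physP (n + 1)).eval y * Real.exp (-y ^ 2)) * (physP m).eval y
            + ((physP n).eval y * Real.exp (-y ^ 2))
              * (Polynomial.derivative (physP m)).eval y) := by
        have h : (fun y : ℝ =>
            -((physP (n + 1)).eval y * Real.exp (-y ^ 2)) * (physP m).eval y
              + ((physP n).eval y * Real.exp (-y ^ 2))
                * (Polynomial.derivative (physP m)).eval y) =
            fun y => -((physP (n + 1)).eval y * (physP m).eval y * Real.exp (-y ^ 2))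
              + (physP n).eval y * (Polynomial.derivative (physP m)).eval y
                * Real.exp (-y ^ 2) := by
          funext y; ring
        rw [h]; exact hA.neg.add hB
      have hFint : Integrable
          (fun y : ℝ => ((physP n).eval y * Real.exp (-y ^ 2)) * (physP m).eval y) := by
        have h : (fun y : ℝ => ((physP n).eval y * Real.exp (-y ^ 2)) * (physP m).eval y) =
            fun y => (physP n * physP m).eval y * Real.exp (-y ^ 2) := by
          funext y; simp; ring
        rw [h]; exact integrable_poly_gauss _
      have hzero := integral_eq_zero_of_hasDerivAt_of_integrable hF hint hFint
      have hsplit : (∫ y : ℝ,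
          (-((physP (n + 1)).eval y * Real.exp (-y ^ 2)) * (physP m).eval y
            + ((physP n).eval y * Real.exp (-y ^ 2))
              * (Polynomial.derivative (physP m)).eval y))
          = -(∫ y : ℝ, (physP (n + 1)).eval y * (physP m).eval y * Real.exp (-y ^ 2))
            + ∫ y : ℝ, (physP n).eval y * (Polynomial.derivative (physP m)).eval y
              * Real.exp (-y ^ 2) := by
        rw [show (fun y : ℝ =>
            -((physP (n + 1)).eval y * Real.exp (-y ^ 2)) * (physP m).eval y
              + ((physP n).eval y * Real.exp (-y ^ 2))
                * (Polynomial.derivative (physP m)).eval y) =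
            fun y => -((physP (n + 1)).eval y * (physP m).eval y * Real.exp (-y ^ 2))
              + (physP n).eval y * (Polynomial.derivative (physP m)).eval y
                * Real.exp (-y ^ 2) from funext fun y => by ring]
        have hAneg : Integrable (fun y : ℝ =>
            -((physP (n + 1)).eval y * (physP m).eval y * Real.exp (-y ^ 2))) volume := hA.neg
        rw [integral_add hAneg hB, integral_neg]
      rw [hsplit] at hzero
      linarith
    rw [key]
    cases m with
    | zero =>
      rw [if_neg (by omega)]
      have : (fun y : ℝ => (physP n).eval y * (Polynomial.derivative (physP 0)).eval y
          * Real.exp (-y ^ 2)) = fun _ : ℝ => (0 : ℝ) := by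
        funext y; simp [physP]
      rw [this, integral_zero]
    | succ k =>
      rw [physP_deriv k]
      have h : (fun y : ℝ => (physP n).eval y
          * ((Polynomial.C (2 * (k + 1) : ℝ)) * physP k).eval y * Real.exp (-y ^ 2)) =
          fun y => (2 * (k + 1) : ℝ)
            * ((physP n).eval y * (physP k).eval y * Real.exp (-y ^ 2)) := by
        funext y; simp; ring
      rw [h, integral_const_mul, ih k]
      by_cases hnk : n = k
      · subst hnk
        rw [if_pos rfl, if_pos rfl]
        rw [Nat.factorial_succ]
        push_cast
        ring
      · rw [if_neg hnk, if_neg (by omega), mul_zero]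

lemma sinh_subst_integrable (g : ℝ → ℝ) (hg : Integrable g) :
    Integrable (fun x : ℝ => Real.cosh x * g (Real.sinh x)) := by
  have hd : ∀ x ∈ Set.univ, HasDerivWithinAt Real.sinh (Real.cosh x) Set.univ x :=
    fun x _ => (Real.hasDerivAt_sinh x).hasDerivWithinAt
  have h := (integrableOn_image_iff_integrableOn_abs_deriv_smul MeasurableSet.univ hd
    (Real.sinh_injective.injOn) g).mp
  rw [Set.image_univ, Real.sinh_surjective.range_eq, integrableOn_univ, integrableOn_univ] at h
  have h2 := h hg
  have : (fun x : ℝ => |Real.cosh x| • g (Real.sinh x))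
      = fun x : ℝ => Real.cosh x * g (Real.sinh x) := by
    funext x
    rw [abs_of_pos (Real.cosh_pos x), smul_eq_mul]
  rwa [this] at h2

lemma sinh_subst_integral (g : ℝ → ℝ) :
    ∫ x : ℝ, Real.cosh x * g (Real.sinh x) = ∫ y : ℝ, g y := by
  have hd : ∀ x ∈ Set.univ, HasDerivWithinAt Real.sinh (Real.cosh x) Set.univ x :=
    fun x _ => (Real.hasDerivAt_sinh x).hasDerivWithinAt
  have h := integral_image_eq_integral_abs_deriv_smul MeasurableSet.univ hd
    (Real.sinh_injective.injOn) g
  rw [Set.image_univ, Real.sinh_surjective.range_eq, setIntegral_univ, setIntegral_univ] at h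
  rw [h]
  congr 1
  funext x
  rw [abs_of_pos (Real.cosh_pos x), smul_eq_mul]

/-- compatibility and biorthonormality of the families
`φₙ = (N_φ/(2ⁿ√(n!))) Hₙ(sinh x) e^{−cosh²x}` and
`ψₙ = (2N_ψ/√(n!)) Hₙ(sinh x) cosh x`. -/
theorem stmt12 (Nφ Nψ : ℂ)
    (hN : (starRingEnd ℂ) Nψ * Nφ = (Real.exp 1 / (2 * Real.sqrt Real.pi) : ℝ))
    (φ ψ : ℕ → ℝ → ℂ)
    (hφdef : ∀ n : ℕ, φ n = fun x =>
      Nφ / ((2 : ℂ) ^ n * (Real.sqrt n.factorial : ℂ))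
        * (hermiteH n (Real.sinh x) : ℂ) * (Real.exp (-(Real.cosh x) ^ 2) : ℂ))
    (hψdef : ∀ n : ℕ, ψ n = fun x =>
      2 * Nψ / (Real.sqrt n.factorial : ℂ)
        * (hermiteH n (Real.sinh x) : ℂ) * (Real.cosh x : ℂ)) :
    ∀ n m : ℕ,
      Integrable (fun x : ℝ => (starRingEnd ℂ) (ψ m x) * φ n x) volume ∧
      ∫ x : ℝ, (starRingEnd ℂ) (ψ m x) * φ n x = if n = m then 1 else 0 := by
  intro n m
  set G : ℝ → ℝ := fun y =>
    Real.exp (-1) * ((physP n).eval y * (physP m).eval y * Real.exp (-y ^ 2)) with hG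
  set u : ℝ → ℝ := fun x => Real.cosh x * G (Real.sinh x) with hu
  set c : ℂ := (starRingEnd ℂ) Nψ * Nφ
      * (2 / ((2 : ℂ) ^ n * ((Real.sqrt n.factorial : ℝ) : ℂ)
        * ((Real.sqrt m.factorial : ℝ) : ℂ))) with hc
  have hGint : Integrable G := (integrable_J n m).const_mul _
  have hpoint : (fun x : ℝ => (starRingEnd ℂ) (ψ m x) * φ n x)
      = fun x : ℝ => c * ((u x : ℝ) : ℂ) := by
    funext x
    rw [hφdef, hψdef]
    have hcosh : Real.exp (-(Real.cosh x) ^ 2)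
        = Real.exp (-1) * Real.exp (-(Real.sinh x) ^ 2) := by
      rw [← Real.exp_add, Real.cosh_sq]
      ring_nf
    simp only [hu, hG, hc, map_mul, map_div₀, Complex.conj_ofReal, map_ofNat,
      hermiteH_eq, hcosh]
    push_cast
    ring
  constructor
  · rw [hpoint]
    exact ((sinh_subst_integrable G hGint).ofReal).const_mul c
  · rw [hpoint, integral_const_mul,
      show (∫ a : ℝ, ((u a : ℝ) : ℂ)) = ((∫ a : ℝ, u a : ℝ) : ℂ) from integral_ofReal,
      show (∫ a : ℝ, u a) = ∫ y : ℝ, G y from sinh_subst_integral G]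
    have hGI : (∫ y : ℝ, G y)
        = Real.exp (-1) * (if n = m then 2 ^ n * n.factorial * Real.sqrt Real.pi else 0) := by
      rw [hG, integral_const_mul, J_eq n m]
    rw [hGI]
    by_cases h : n = m
    · subst h
      rw [if_pos rfl, if_pos rfl]
      have h1 : Real.sqrt n.factorial * Real.sqrt n.factorial = (n.factorial : ℝ) :=
        Real.mul_self_sqrt (by positivity)
      have key : (Real.exp 1 / (2 * Real.sqrt Real.pi))
          * (2 / (2 ^ n * Real.sqrt n.factorial * Real.sqrt n.factorial))
          * (Real.exp (-1) * (2 ^ n * (n.factorial : ℝ) * Real.sqrt Real.pi)) = 1 := by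
        have h2 : Real.sqrt Real.pi ≠ 0 := by positivity
        have h3 : (n.factorial : ℝ) ≠ 0 := by positivity
        have h4 : Real.sqrt (n.factorial : ℝ) ≠ 0 := by positivity
        have h5 : (2 : ℝ) ^ n ≠ 0 := by positivity
        rw [Real.exp_neg]
        field_simp
        linear_combination (-1) * h1
      have hcast : c * ((Real.exp (-1) * (2 ^ n * (n.factorial : ℝ) * Real.sqrt Real.pi) : ℝ) : ℂ)
          = (((Real.exp 1 / (2 * Real.sqrt Real.pi))
          * (2 / (2 ^ n * Real.sqrt n.factorial * Real.sqrt n.factorial))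
          * (Real.exp (-1) * (2 ^ n * (n.factorial : ℝ) * Real.sqrt Real.pi)) : ℝ) : ℂ) := by
        rw [hc, hN]
        push_cast
        ring
      rw [hcast, key, Complex.ofReal_one]
    · rw [if_neg h, if_neg h, mul_zero, Complex.ofReal_zero, mul_zero]
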